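/- Let G be the graph with vertex set [n]⁷ where x ~ y iff the difference pattern ρ(x,y) lies in S = Q₇ \ [(1⁴ × Q₃⁻) ∪ {0⁷} ∪ {0⁴ × 1³}]. Then the independence number of G is at most 3n. -/

import Mathlib

/-- `s` is an independent set of the graph `G`. -/
def IsIndepSet' {V : Type*} (G : SimpleGraph V) (s : Set V) : Prop :=
  ∀ ⦃u⦄, u ∈ s → ∀ ⦃v⦄, v ∈ s → u ≠ v → ¬ G.Adj u v

/-- The independence number of `G`. -/
noncomputable def alphaNum {V : Type*} (G : SimpleGraph V) [Fintype V] : ℕ :=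
  sSup {n | ∃ s : Finset V, IsIndepSet' G ↑s ∧ s.card = n}

/-- `Q₃⁻ = {0,1}³ \ {0³, 1³}` does not appear directly here; `Sset` is
`S = Q₇ \ [(1⁴ × Q₃⁻) ∪ {0⁷} ∪ {0⁴ × 1³}]`, where the first four coordinates play the
role of `Q₄` and the last three of `Q₃`. -/
def Sset : Set (Fin 7 → Bool) :=
  {v | ¬ (((∀ i : Fin 7, i.val < 4 → v i = true) ∧
            ¬ (∀ i j : Fin 7, 4 ≤ i.val → 4 ≤ j.val → v i = v j))
        ∨ (∀ i, v i = false)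
        ∨ ((∀ i : Fin 7, i.val < 4 → v i = false) ∧
           (∀ i : Fin 7, 4 ≤ i.val → v i = true)))}

/-- The difference pattern `ρ(x,y) ∈ {0,1}⁷` of `x, y ∈ [n]⁷` : the `i`-th coordinate is
`true` iff `xᵢ ≠ yᵢ`. -/
def rho {n : ℕ} (x y : Fin 7 → Fin n) : Fin 7 → Bool :=
  fun i => decide (x i ≠ y i)

/-- The counterexample graph on `[n]⁷`: `x ~ y` iff `ρ(x,y) ∈ S`. -/
def Gcex (n : ℕ) : SimpleGraph (Fin 7 → Fin n) where
  Adj x y := rho x y ∈ Sset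
  symm := by
    refine ⟨?_⟩
    intro x y h
    have e : rho y x = rho x y := funext fun i => by simp [rho, ne_comm]
    rwa [e]
  loopless := by
    refine ⟨?_⟩
    intro x h
    exact h (Or.inr (Or.inl (fun i => by simp [rho])))

/-- The independence number of the counterexample graph `G` on `[n]⁷` is at most `3n`:
every independent set has at most `3n` elements. -/
theorem indep_Gcex_le (n : ℕ) (s : Finset (Fin 7 → Fin n))
    (hs : IsIndepSet' (Gcex n) ↑s) : s.card ≤ 3 * n := by
  classical
  have key : ∀ x ∈ s, ∀ y ∈ s, x ≠ y →
      ((∀ i : Fin 7, i.val < 4 → x i ≠ y i) ∧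
        (∃ j : Fin 7, 4 ≤ j.val ∧ x j = y j)) ∨
      ((∀ i : Fin 7, i.val < 4 → x i = y i) ∧
        (∀ i : Fin 7, 4 ≤ i.val → x i ≠ y i)) := by
    intro x hx y hy hxy
    have h := hs hx hy hxy
    simp only [Gcex, Sset, Set.mem_setOf_eq, not_not] at h
    rcases h with h | h | h
    · left
      refine ⟨fun i hi => by simpa [rho] using h.1 i hi, ?_⟩
      have h2 := h.2
      push_neg at h2
      obtain ⟨i, j, hi, hj, hij⟩ := h2
      by_cases hxi : x i = y i
      · exact ⟨i, hi, hxi⟩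
      · have hri : rho x y i = true := by simp [rho, hxi]
        have hrj : rho x y j ≠ true := fun hh => hij (hri.trans hh.symm)
        exact ⟨j, hj, by simpa [rho] using hrj⟩
    · exact absurd (funext fun i => by simpa [rho] using h i) hxy
    · exact Or.inr ⟨fun i hi => by simpa [rho] using h.1 i hi,
        fun i hi => by simpa [rho] using h.2 i hi⟩
  set t : Finset (Fin n) := s.image (fun x => x 0) with ht
  rcases le_or_gt t.card 1 with h1 | h1
  · -- one class: coordinate 4 is injective on s
    have hinj : Set.InjOn (fun x : Fin 7 → Fin n => x 4) ↑s := by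
      intro x hx y hy hxy4
      by_contra hne
      rcases key x hx y hy hne with ⟨hA, _⟩ | ⟨_, hB⟩
      · have hx0 : x 0 ∈ t := Finset.mem_image_of_mem _ hx
        have hy0 : y 0 ∈ t := Finset.mem_image_of_mem _ hy
        exact hA 0 (by decide) (Finset.card_le_one.mp h1 _ hx0 _ hy0)
      · exact hB 4 (by decide) hxy4
    calc s.card ≤ (Finset.univ : Finset (Fin n)).card :=
          Finset.card_le_card_of_injOn _ (fun _ _ => Finset.mem_univ _) hinj
      _ = n := Finset.card_fin n
      _ ≤ 3 * n := by omega
  · -- at least two classes: every fiber has ≤ 3 elements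
    have hfiber : ∀ v ∈ t, (s.filter (fun x => x 0 = v)).card ≤ 3 := by
      intro v hv
      obtain ⟨w, hw, hwv⟩ := Finset.exists_mem_ne h1 v
      obtain ⟨u, hu, hu0⟩ := Finset.mem_image.mp hw
      have hagree : ∀ x ∈ s.filter (fun x => x 0 = v),
          ∃ j : Fin 7, 4 ≤ j.val ∧ x j = u j := by
        intro x hx
        have hxs := (Finset.mem_filter.mp hx).1
        have hx0 : x 0 = v := (Finset.mem_filter.mp hx).2
        have hne : x ≠ u := by
          intro h; apply hwv; rw [← hu0, ← h, hx0]
        rcases key x hxs u hu hne with ⟨_, hj⟩ | ⟨hB, _⟩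
        · exact hj
        · exact (hwv (by rw [← hu0, ← hx0]; exact (hB 0 (by decide)).symm)).elim
      set f : (Fin 7 → Fin n) → Fin 7 := fun x =>
        if h : ∃ j : Fin 7, 4 ≤ j.val ∧ x j = u j then h.choose else 4 with hf
      have hfspec : ∀ x ∈ s.filter (fun x => x 0 = v),
          4 ≤ (f x).val ∧ x (f x) = u (f x) := by
        intro x hx
        have h := hagree x hx
        simp only [hf, dif_pos h]
        exact h.choose_spec
      have : (s.filter (fun x => x 0 = v)).card ≤
          ({(4 : Fin 7), 5, 6} : Finset (Fin 7)).card := by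
        apply Finset.card_le_card_of_injOn f
        · intro x hx
          have h4 := (hfspec x hx).1
          have h7 := (f x).isLt
          simp only [Finset.mem_coe, Finset.mem_insert, Finset.mem_singleton]
          have hv : (f x).val = 4 ∨ (f x).val = 5 ∨ (f x).val = 6 := by omega
          rcases hv with h | h | h
          · exact Or.inl (Fin.ext h)
          · exact Or.inr (Or.inl (Fin.ext h))
          · exact Or.inr (Or.inr (Fin.ext h))
        · intro x hx y hy hfxy
          by_contra hne
          have hxs := (Finset.mem_filter.mp hx).1
          have hys := (Finset.mem_filter.mp hy).1
          rcases key x hxs y hys hne with ⟨hA, _⟩ | ⟨_, hB⟩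
          · exact hA 0 (by decide)
              (((Finset.mem_filter.mp hx).2).trans ((Finset.mem_filter.mp hy).2).symm)
          · have h1 := (hfspec x hx).2
            have h2 := (hfspec y hy).2
            rw [hfxy] at h1
            exact hB (f y) (hfspec y hy).1 (h1.trans h2.symm)
      simpa using this
    calc s.card = ∑ v ∈ t, (s.filter (fun x => x 0 = v)).card :=
          Finset.card_eq_sum_card_image _ _
      _ ≤ ∑ _v ∈ t, 3 := Finset.sum_le_sum hfiber
      _ = t.card * 3 := by rw [Finset.sum_const, smul_eq_mul]
      _ ≤ n * 3 := by
          have := Finset.card_le_univ t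
          simpa using Nat.mul_le_mul_right 3 (by simpa using this)
      _ = 3 * n := Nat.mul_comm _ _
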